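/- Let m₁, m₂ be basic probability assignments on a finite nonempty set Θ with D₁ > 0 and D₂ > 0, where Nᵢ = ∑_{A⊆Θ, |A|>1} mᵢ(A), Dᵢ = ∑_{A⊆Θ, |A|>1} |A|·mᵢ(A), βᵢ = Nᵢ/Dᵢ, and Rᵢ(x) = (Plᵢ(x) − mᵢ(x))/Dᵢ is the relative uncertainty of singletons. Then the intersection probability commutes with convex combination, i.e., p[α₁Bel₁ + α₂Bel₂](x) = α₁·p[Bel₁](x) + α₂·p[Bel₂](x) holds for all α₁ ∈ [0,1] (α₂ = 1 − α₁) and all x ∈ Θ, if and only if β₁ = β₂ or R₁(x) = R₂(x) for all x ∈ Θ. -/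
import Mathlib


open Finset

/-- A basic probability assignment on a finite set `Θ`. -/
def IsBPA {Θ : Type*} [Fintype Θ] (m : Finset Θ → ℝ) : Prop :=
  m ∅ = 0 ∧ (∀ A, 0 ≤ m A) ∧ (∑ A : Finset Θ, m A) = 1

/-- Belief function `Bel(A) = ∑_{B ⊆ A} m(B)`. -/
noncomputable def Bel {Θ : Type*} [Fintype Θ] [DecidableEq Θ] (m : Finset Θ → ℝ)
    (A : Finset Θ) : ℝ :=
  ∑ B ∈ A.powerset, m B

/-- Plausibility function `Pl(A) = ∑_{B ∩ A ≠ ∅} m(B)`. -/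
noncomputable def Pl {Θ : Type*} [Fintype Θ] [DecidableEq Θ] (m : Finset Θ → ℝ)
    (A : Finset Θ) : ℝ :=
  ∑ B ∈ Finset.univ.filter (fun B => B ∩ A ≠ ∅), m B

/-- Total mass of singletons `k_Bel`. -/
noncomputable def kBel {Θ : Type*} [Fintype Θ] (m : Finset Θ → ℝ) : ℝ :=
  ∑ x : Θ, m {x}

/-- Total plausibility of singletons `k_Pl`. -/
noncomputable def kPl {Θ : Type*} [Fintype Θ] [DecidableEq Θ] (m : Finset Θ → ℝ) : ℝ :=
  ∑ x : Θ, Pl m {x}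

/-- `β[Bel] = (1 - k_Bel)/(k_Pl - k_Bel)`. -/
noncomputable def betaBel {Θ : Type*} [Fintype Θ] [DecidableEq Θ] (m : Finset Θ → ℝ) : ℝ :=
  (1 - kBel m) / (kPl m - kBel m)

/-- The intersection probability `p[Bel](x) = m(x) + β[Bel]⬝(Pl(x) - m(x))`. -/
noncomputable def pInt {Θ : Type*} [Fintype Θ] [DecidableEq Θ] (m : Finset Θ → ℝ)
    (x : Θ) : ℝ :=
  m {x} + betaBel m * (Pl m {x} - m {x})

/-- `N = ∑_{|A| > 1} m(A)`, total mass of non-singleton focal elements. -/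
noncomputable def bigN {Θ : Type*} [Fintype Θ] (m : Finset Θ → ℝ) : ℝ :=
  ∑ A ∈ Finset.univ.filter (fun A : Finset Θ => 1 < A.card), m A

/-- `D = ∑_{|A| > 1} |A|⬝m(A)`. -/
noncomputable def bigD {Θ : Type*} [Fintype Θ] (m : Finset Θ → ℝ) : ℝ :=
  ∑ A ∈ Finset.univ.filter (fun A : Finset Θ => 1 < A.card), (A.card : ℝ) * m A

/-- `β = N/D`. -/
noncomputable def betaND {Θ : Type*} [Fintype Θ] (m : Finset Θ → ℝ) : ℝ :=
  bigN m / bigD m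

/-- Intersection probability `p[Bel](x) = m(x) + β⬝(Pl(x) - m(x))` with `β = N/D`. -/
noncomputable def pIntND {Θ : Type*} [Fintype Θ] [DecidableEq Θ]
    (m : Finset Θ → ℝ) (x : Θ) : ℝ :=
  m {x} + betaND m * (Pl m {x} - m {x})

/-- Relative uncertainty of singletons `R(x) = (Pl(x) - m(x))/D`. -/
noncomputable def relUncND {Θ : Type*} [Fintype Θ] [DecidableEq Θ]
    (m : Finset Θ → ℝ) (x : Θ) : ℝ :=
  (Pl m {x} - m {x}) / bigD m

/-- Theorem 9: the intersection probability commutes with convex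
combination iff `β[Bel₁] = β[Bel₂]` or `R[Bel₁] = R[Bel₂]`. -/
lemma hNlin {Θ : Type*} [Fintype Θ] (m₁ m₂ : Finset Θ → ℝ) (α : ℝ) :
    bigN (fun A => α * m₁ A + (1-α) * m₂ A) = α * bigN m₁ + (1-α) * bigN m₂ := by
  simp [bigN, Finset.sum_add_distrib, ← Finset.mul_sum]

lemma hDlin {Θ : Type*} [Fintype Θ] (m₁ m₂ : Finset Θ → ℝ) (α : ℝ) :
    bigD (fun A => α * m₁ A + (1-α) * m₂ A) = α * bigD m₁ + (1-α) * bigD m₂ := by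
  have h : ∀ A : Finset Θ, (A.card : ℝ) * (α * m₁ A + (1-α) * m₂ A)
      = α * ((A.card:ℝ) * m₁ A) + (1-α) * ((A.card:ℝ) * m₂ A) := fun A => by ring
  simp only [bigD, h, Finset.sum_add_distrib, ← Finset.mul_sum]

lemma hPllin {Θ : Type*} [Fintype Θ] [DecidableEq Θ] (m₁ m₂ : Finset Θ → ℝ) (α : ℝ) (A : Finset Θ) :
    Pl (fun B => α * m₁ B + (1-α) * m₂ B) A = α * Pl m₁ A + (1-α) * Pl m₂ A := by
  simp [Pl, Finset.sum_add_distrib, ← Finset.mul_sum]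

theorem pInt_commutes_with_convex_combination_iff
    {Θ : Type*} [Fintype Θ] [DecidableEq Θ] [Nonempty Θ]
    (m₁ m₂ : Finset Θ → ℝ) (hm₁ : IsBPA m₁) (hm₂ : IsBPA m₂)
    (hD₁ : 0 < bigD m₁) (hD₂ : 0 < bigD m₂) :
    (∀ α₁ : ℝ, 0 ≤ α₁ → α₁ ≤ 1 → ∀ x : Θ,
        pIntND (fun A => α₁ * m₁ A + (1 - α₁) * m₂ A) x =
          α₁ * pIntND m₁ x + (1 - α₁) * pIntND m₂ x) ↔
      (betaND m₁ = betaND m₂ ∨ ∀ x : Θ, relUncND m₁ x = relUncND m₂ x) := by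
  have hD₁' := hD₁.ne'
  have hD₂' := hD₂.ne'
  constructor
  · intro h
    have key : ∀ x : Θ, (bigN m₁ * bigD m₂ - bigN m₂ * bigD m₁) *
        (bigD m₁ * (Pl m₂ {x} - m₂ {x}) - bigD m₂ * (Pl m₁ {x} - m₁ {x})) = 0 := by
      intro x
      have E := h (1/2) (by norm_num) (by norm_num) x
      simp only [pIntND, betaND, hNlin, hDlin, hPllin] at E
      have hd : (1/2 : ℝ) * bigD m₁ + (1 - 1/2) * bigD m₂ ≠ 0 := by positivity
      field_simp at E
      nlinarith [E, sq_nonneg (bigD m₁ - bigD m₂)]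
    by_cases hβ : bigN m₁ * bigD m₂ = bigN m₂ * bigD m₁
    · left
      unfold betaND
      rw [div_eq_div_iff hD₁' hD₂']
      linarith [hβ]
    · right
      intro x
      have h2 : bigD m₁ * (Pl m₂ {x} - m₂ {x}) - bigD m₂ * (Pl m₁ {x} - m₁ {x}) = 0 := by
        rcases mul_eq_zero.1 (key x) with h' | h'
        · exact absurd (by linarith) hβ
        · exact h'
      unfold relUncND
      rw [div_eq_div_iff hD₁' hD₂']
      linarith
  · intro h α hα0 hα1 x
    have hmin : (0:ℝ) < min (bigD m₁) (bigD m₂) := lt_min hD₁ hD₂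
    have hd : (0:ℝ) < α * bigD m₁ + (1 - α) * bigD m₂ := by
      nlinarith [mul_nonneg hα0 (sub_nonneg.2 (min_le_left (bigD m₁) (bigD m₂))),
        mul_nonneg (sub_nonneg.2 hα1) (sub_nonneg.2 (min_le_right (bigD m₁) (bigD m₂)))]
    simp only [pIntND, betaND, hNlin, hDlin, hPllin]
    rcases h with hβ | hR
    · have hNE : bigN m₁ * bigD m₂ = bigN m₂ * bigD m₁ := by
        have h' := hβ; unfold betaND at h'
        rw [div_eq_div_iff hD₁' hD₂'] at h'; linarith
      field_simp
      linear_combination (α*(1-α)*(bigD m₁*(Pl m₂ {x} - m₂ {x}) - bigD m₂*(Pl m₁ {x} - m₁ {x}))) * hNE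
    · have hf : bigD m₂ * (Pl m₁ {x} - m₁ {x}) = bigD m₁ * (Pl m₂ {x} - m₂ {x}) := by
        have h' := hR x; unfold relUncND at h'
        rw [div_eq_div_iff hD₁' hD₂'] at h'; linarith
      field_simp
      linear_combination (α*(1-α)*(bigN m₂*bigD m₁ - bigN m₁*bigD m₂)) * hf
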